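/- Let K be a number field and let m, n ⊆ K be two full lattices. Then there exists a positive integer N such that the principal congruence subgroup Γ_{O_K}(N·O_K) = {γ ∈ GL₂(O_K) : γ ≡ I₂ mod N·O_K} is contained in GL(m⊕n) = {γ ∈ GL₂(K) : (m,n)·γ = (m,n)}, where GL₂(K) acts on row vectors (x,y) ∈ K² by right matrix multiplication. -/

import Mathlib

/-- `L` is a full lattice in the number field `K`. -/
def IsFullLattice (K : Type*) [Field K] [NumberField K] (L : Submodule ℤ K) : Prop :=
  L.FG ∧ Submodule.span ℚ (L : Set K) = ⊤

section aux
variable {K : Type*} [Field K] [NumberField K]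

/-- Any single element can be scaled into a full lattice. -/
lemma exists_nat_mul_mem (m : Submodule ℤ K) (hm : Submodule.span ℚ (m : Set K) = ⊤)
    (z : K) : ∃ N : ℕ, 0 < N ∧ (N : K) * z ∈ m := by
  have hz : z ∈ Submodule.span ℚ (m : Set K) := by rw [hm]; exact Submodule.mem_top
  induction hz using Submodule.span_induction with
  | mem x hx => exact ⟨1, one_pos, by simpa using hx⟩
  | zero => exact ⟨1, one_pos, by simp⟩
  | add x y _ _ hx hy =>
      obtain ⟨N1, hN1, h1⟩ := hx
      obtain ⟨N2, hN2, h2⟩ := hy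
      refine ⟨N1 * N2, Nat.mul_pos hN1 hN2, ?_⟩
      have : ((N1 * N2 : ℕ) : K) * (x + y)
          = (N2 : ℤ) • ((N1 : K) * x) + (N1 : ℤ) • ((N2 : K) * y) := by
        simp only [zsmul_eq_mul]; push_cast; ring
      rw [this]
      exact m.add_mem (m.smul_mem _ h1) (m.smul_mem _ h2)
  | smul q x _ hx =>
      obtain ⟨N1, hN1, h1⟩ := hx
      refine ⟨q.den * N1, Nat.mul_pos q.pos hN1, ?_⟩
      have : ((q.den * N1 : ℕ) : K) * (q • x) = q.num • ((N1 : K) * x) := by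
        rw [Rat.smul_def, zsmul_eq_mul]
        push_cast
        rw [Rat.cast_def]
        field_simp
      rw [this]
      exact m.smul_mem _ h1

/-- A finitely generated submodule can be scaled into a full lattice. -/
lemma exists_nat_mul_fg_le (m : Submodule ℤ K) (hm : Submodule.span ℚ (m : Set K) = ⊤)
    (L : Submodule ℤ K) (hL : L.FG) : ∃ N : ℕ, 0 < N ∧ ∀ z ∈ L, (N : K) * z ∈ m := by
  classical
  obtain ⟨s, rfl⟩ := hL
  choose f hf1 hf2 using fun z : K => exists_nat_mul_mem m hm z
  refine ⟨∏ z ∈ s, f z, Finset.prod_pos fun z _ => hf1 z, ?_⟩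
  intro z hz
  have hsub : (Submodule.span ℤ (s : Set K)) ≤
      Submodule.comap (LinearMap.mulLeft ℤ ((∏ z ∈ s, f z : ℕ) : K)) m := by
    rw [Submodule.span_le]
    intro x hx
    simp only [SetLike.mem_coe, Submodule.mem_comap, LinearMap.mulLeft_apply]
    have : ((∏ z ∈ s, f z : ℕ) : K) * x
        = ((∏ z ∈ s.erase x, f z : ℕ) : ℤ) • ((f x : K) * x) := by
      rw [zsmul_eq_mul, ← Finset.prod_erase_mul s f hx]
      push_cast
      ring
    rw [this]
    exact m.smul_mem _ (hf2 x)
  simpa using hsub hz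

end aux

/-- For any two full lattices `m, n ⊆ K` there exists a positive integer `N` such that
the principal congruence subgroup `Γ_{O_K}(N·O_K)` (matrices in `GL₂(O_K)` congruent to
the identity mod `N·O_K`) is contained in
`GL(m⊕n) = {γ ∈ GL₂(K) : (m,n)·γ = (m,n)}`, where `GL₂(K)` acts on row vectors by
right matrix multiplication. -/
theorem congruence_subgroup_le_stabilizer (K : Type*) [Field K] [NumberField K]
    (m n : Submodule ℤ K) (hm : IsFullLattice K m) (hn : IsFullLattice K n) :
    ∃ N : ℕ, 0 < N ∧ ∀ γ : Matrix (Fin 2) (Fin 2) K,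
      (∀ i j, γ i j ∈ integralClosure ℤ K) →
      (∃ δ ∈ integralClosure ℤ K, γ.det * δ = 1) →
      (∀ i j, ∃ c ∈ integralClosure ℤ K,
        γ i j - (1 : Matrix (Fin 2) (Fin 2) K) i j = (N : K) * c) →
      (fun v : Fin 2 → K => Matrix.vecMul v γ) ''
          {v : Fin 2 → K | v 0 ∈ m ∧ v 1 ∈ n}
        = {v : Fin 2 → K | v 0 ∈ m ∧ v 1 ∈ n} := by
  obtain ⟨hmfg, hmq⟩ := hm
  obtain ⟨hnfg, hnq⟩ := hn
  set O : Submodule ℤ K := Subalgebra.toSubmodule (integralClosure ℤ K) with hO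
  have hOfg : O.FG := by
    have : Module.Finite ℤ (NumberField.RingOfIntegers K) := inferInstance
    exact Module.Finite.iff_fg.mp this
  set T : Submodule ℤ K := (m ⊔ n) * O with hT
  have hTfg : T.FG := (hmfg.sup hnfg).mul hOfg
  obtain ⟨N1, hN1, hNm⟩ := exists_nat_mul_fg_le m hmq T hTfg
  obtain ⟨N2, hN2, hNn⟩ := exists_nat_mul_fg_le n hnq T hTfg
  refine ⟨N1 * N2, Nat.mul_pos hN1 hN2, ?_⟩
  set M : ℕ := N1 * N2 with hM
  -- scaled versions
  have hMm : ∀ z ∈ T, ((M : ℕ) : K) * z ∈ m := by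
    intro z hz
    have : ((M : ℕ) : K) * z = (N2 : ℤ) • ((N1 : K) * z) := by
      rw [zsmul_eq_mul]; simp only [hM, Nat.cast_mul]; push_cast; ring
    rw [this]; exact m.smul_mem _ (hNm z hz)
  have hMn : ∀ z ∈ T, ((M : ℕ) : K) * z ∈ n := by
    intro z hz
    have : ((M : ℕ) : K) * z = (N1 : ℤ) • ((N2 : K) * z) := by
      rw [zsmul_eq_mul]; simp only [hM, Nat.cast_mul]; push_cast; ring
    rw [this]; exact n.smul_mem _ (hNn z hz)
  intro γ hint hdet hcong
  -- The forward claim for any matrix satisfying the hypotheses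
  have fwd : ∀ A : Matrix (Fin 2) (Fin 2) K,
      (∀ i j, A i j ∈ integralClosure ℤ K) →
      (∀ i j, ∃ c ∈ integralClosure ℤ K,
        A i j - (1 : Matrix (Fin 2) (Fin 2) K) i j = ((M : ℕ) : K) * c) →
      ∀ v : Fin 2 → K, v 0 ∈ m → v 1 ∈ n →
        (Matrix.vecMul v A) 0 ∈ m ∧ (Matrix.vecMul v A) 1 ∈ n := by
    intro A _ hc v hv0 hv1
    obtain ⟨c00, hc00, e00⟩ := hc 0 0
    obtain ⟨c01, hc01, e01⟩ := hc 0 1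
    obtain ⟨c10, hc10, e10⟩ := hc 1 0
    obtain ⟨c11, hc11, e11⟩ := hc 1 1
    simp only [Matrix.one_apply_eq, Matrix.one_apply_ne, Fin.zero_eq_one_iff,
      Fin.one_eq_zero_iff, Ne, OfNat.ofNat_ne_one, not_false_iff, sub_zero] at e00 e01 e10 e11
    have hTm : ∀ (x : K), x ∈ m → ∀ c, c ∈ integralClosure ℤ K → x * c ∈ T := by
      intro x hx c hcmem
      exact Submodule.mul_mem_mul (Submodule.mem_sup_left hx) hcmem
    have hTn : ∀ (x : K), x ∈ n → ∀ c, c ∈ integralClosure ℤ K → x * c ∈ T := by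
      intro x hx c hcmem
      exact Submodule.mul_mem_mul (Submodule.mem_sup_right hx) hcmem
    constructor
    · have e : Matrix.vecMul v A 0
          = v 0 + (((M:ℕ):K) * (v 0 * c00) + ((M:ℕ):K) * (v 1 * c10)) := by
        simp only [Matrix.vecMul, dotProduct, Fin.sum_univ_two]
        linear_combination (v 0) * e00 + (v 1) * e10
      rw [e]
      exact m.add_mem hv0 (m.add_mem (hMm _ (hTm _ hv0 _ hc00)) (hMm _ (hTn _ hv1 _ hc10)))
    · have e : Matrix.vecMul v A 1
          = v 1 + (((M:ℕ):K) * (v 0 * c01) + ((M:ℕ):K) * (v 1 * c11)) := by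
        simp only [Matrix.vecMul, dotProduct, Fin.sum_univ_two]
        linear_combination (v 0) * e01 + (v 1) * e11
      rw [e]
      exact n.add_mem hv1 (n.add_mem (hMn _ (hTm _ hv0 _ hc01)) (hMn _ (hTn _ hv1 _ hc11)))
  -- construct the inverse matrix
  obtain ⟨δ, hδmem, hδ⟩ := hdet
  set B : Matrix (Fin 2) (Fin 2) K := δ • γ.adjugate with hB
  have hBγ : B * γ = 1 := by
    rw [hB, Matrix.smul_mul, Matrix.adjugate_mul, smul_smul, mul_comm δ, hδ, one_smul]
  have hBint : ∀ i j, B i j ∈ integralClosure ℤ K := by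
    intro i j
    rw [hB, Matrix.adjugate_fin_two]
    fin_cases i <;> fin_cases j <;>
      simp only [Matrix.smul_apply, Matrix.cons_val', Matrix.cons_val_zero, Matrix.cons_val_one,
        Matrix.head_cons, Matrix.head_fin_const, Matrix.empty_val', Matrix.cons_val_fin_one,
        smul_eq_mul] <;>
      first
        | exact mul_mem hδmem (hint _ _)
        | exact mul_mem hδmem (neg_mem (hint _ _))
  have hBcong : ∀ i j, ∃ c ∈ integralClosure ℤ K,
      B i j - (1 : Matrix (Fin 2) (Fin 2) K) i j = ((M : ℕ) : K) * c := by
    have key : B - 1 = B * (1 - γ) := by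
      rw [Matrix.mul_sub, Matrix.mul_one, hBγ]
    intro i j
    obtain ⟨c0, hc0, e0⟩ := hcong 0 j
    obtain ⟨c1, hc1, e1⟩ := hcong 1 j
    refine ⟨-(B i 0 * c0 + B i 1 * c1),
      neg_mem (add_mem (mul_mem (hBint i 0) hc0) (mul_mem (hBint i 1) hc1)), ?_⟩
    have : B i j - (1 : Matrix (Fin 2) (Fin 2) K) i j = (B * (1 - γ)) i j := by
      rw [← key]; simp [Matrix.sub_apply]
    rw [this, Matrix.mul_apply, Fin.sum_univ_two, Matrix.sub_apply, Matrix.sub_apply]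
    linear_combination (-(B i 0)) * e0 + (-(B i 1)) * e1
  -- conclude
  ext v
  simp only [Set.mem_image, Set.mem_setOf_eq]
  constructor
  · rintro ⟨u, ⟨hu0, hu1⟩, rfl⟩
    exact fwd γ hint hcong u hu0 hu1
  · intro hv
    refine ⟨Matrix.vecMul v B, fwd B hBint hBcong v hv.1 hv.2, ?_⟩
    rw [Matrix.vecMul_vecMul, hBγ, Matrix.vecMul_one]
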